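/- Let d ≥ 1 and n ≥ 2 be integers. If GL_d(ℚ) contains an element of finite order exactly n (equivalently, if ℤ/nℤ acts faithfully and linearly on a ℚ-vector space of dimension d), then f(n) := (Σ_{p prime, p ∣ n} φ(p^{v_p(n)})) − ε(n) ≤ d. -/

import Mathlib

open Polynomial Finset

/-- `ε(n) = 1` if `v₂(n) = 1` and `n ≠ 2`, and `ε(n) = 0` otherwise. -/
def epsAux (n : ℕ) : ℕ := if n.factorization 2 = 1 ∧ n ≠ 2 then 1 else 0

/-- `f(n) = (Σ_{p prime, p ∣ n} φ(p^{v_p(n)})) − ε(n)`. -/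
def fAux (n : ℕ) : ℕ := (∑ p ∈ n.primeFactors, (p ^ n.factorization p).totient) - epsAux n

/-- Sum is at most product for values that are all at least 2. -/
lemma sum_le_prod_of_two_le (P : Finset ℕ) (F : ℕ → ℕ) (h : ∀ p ∈ P, 2 ≤ F p) :
    ∑ p ∈ P, F p ≤ ∏ p ∈ P, F p := by
  classical
  induction P using Finset.induction_on with
  | empty => simp
  | @insert a P ha ih =>
    rw [Finset.sum_insert ha, Finset.prod_insert ha]
    have h2 : 2 ≤ F a := h a (mem_insert_self a P)
    have hrest : ∑ p ∈ P, F p ≤ ∏ p ∈ P, F p := ih fun p hp => h p (mem_insert_of_mem hp)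
    rcases P.eq_empty_or_nonempty with rfl | hne
    · simp
    · have hP2 : 2 ≤ ∏ p ∈ P, F p := by
        obtain ⟨b, hb⟩ := hne
        calc 2 ≤ F b := h b (mem_insert_of_mem hb)
        _ ≤ ∏ p ∈ P, F p := Finset.single_le_prod' (fun p hp => by have := h p (mem_insert_of_mem hp); omega) hb
      nlinarith [hrest, h2, hP2]

/-- Sum is at most product plus one, when all values are at least 1 and only `p = 2` can
have value `1`. -/
lemma sum_le_prod_add (P : Finset ℕ) (F : ℕ → ℕ) (h1 : ∀ p ∈ P, 1 ≤ F p)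
    (hone : ∀ p ∈ P, F p = 1 → p = 2) :
    ∑ p ∈ P, F p ≤ ∏ p ∈ P, F p + (if 2 ∈ P ∧ F 2 = 1 then 1 else 0) := by
  classical
  set T := P.filter (fun p => 2 ≤ F p) with hT
  have hsplit : ∑ p ∈ P, F p = ∑ p ∈ T, F p + ∑ p ∈ P.filter (fun p => ¬ 2 ≤ F p), F p :=
    (Finset.sum_filter_add_sum_filter_not P _ F).symm
  have hsub : P.filter (fun p => ¬ 2 ≤ F p) ⊆ {2} := by
    intro p hp
    rw [Finset.mem_filter] at hp
    have : F p = 1 := le_antisymm (by omega) (h1 p hp.1)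
    simp [hone p hp.1 this]
  have hT_le : ∑ p ∈ T, F p ≤ ∏ p ∈ T, F p :=
    sum_le_prod_of_two_le T F fun p hp => (Finset.mem_filter.mp hp).2
  have hTP : ∏ p ∈ T, F p ≤ ∏ p ∈ P, F p := by
    apply Finset.prod_le_prod_of_subset_of_one_le' (Finset.filter_subset _ _)
    intro p hp _
    exact h1 p hp
  have hrem : ∑ p ∈ P.filter (fun p => ¬ 2 ≤ F p), F p ≤ (if 2 ∈ P ∧ F 2 = 1 then 1 else 0) := by
    rcases (P.filter (fun p => ¬ 2 ≤ F p)).eq_empty_or_nonempty with he | hne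
    · rw [he, Finset.sum_empty]; exact Nat.zero_le _
    · obtain ⟨p, hp⟩ := hne
      have hp2 : p = 2 := by have := hsub hp; simpa using this
      subst hp2
      rw [Finset.mem_filter] at hp
      have hF : F 2 = 1 := le_antisymm (by omega) (h1 2 hp.1)
      rw [if_pos ⟨hp.1, hF⟩]
      calc ∑ q ∈ P.filter (fun p => ¬ 2 ≤ F p), F q
          ≤ ∑ q ∈ ({2} : Finset ℕ), F q := by
            apply Finset.sum_le_sum_of_subset_of_nonneg hsub
            intro i _ _; exact Nat.zero_le _
        _ = 1 := by simp [hF]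
  omega

lemma totient_eq_prod_primeFactors (m : ℕ) (hm : m ≠ 0) :
    m.totient = ∏ p ∈ m.primeFactors, (p ^ m.factorization p).totient := by
  rw [Nat.totient_eq_prod_factorization hm, Finsupp.prod, Nat.support_factorization]
  refine Finset.prod_congr rfl fun p hp => ?_
  rw [Nat.totient_prime_pow (Nat.prime_of_mem_primeFactors hp)]
  exact Nat.Prime.factorization_pos_of_dvd (Nat.prime_of_mem_primeFactors hp) hm
    (Nat.dvd_of_mem_primeFactors hp)

/-- The key combinatorial lemma: if `S` is a finite set of divisors of `n` realizing the
`p`-adic valuation of `n` at every prime `p ∣ n`, then `f(n) ≤ ∑_{m ∈ S} φ(m)`. -/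
lemma fAux_le_sum_totient (n : ℕ) (hn0 : n ≠ 0) (S : Finset ℕ)
    (hS : ∀ m ∈ S, m ∣ n ∧ m ≠ 0)
    (hmax : ∀ p ∈ n.primeFactors, ∃ m ∈ S, m.factorization p = n.factorization p) :
    fAux n ≤ ∑ m ∈ S, Nat.totient m := by
  classical
  by_cases hn2 : n = 2
  · subst hn2
    have h2 : (2 : ℕ) ∈ Nat.primeFactors 2 :=
      Nat.mem_primeFactors.mpr ⟨Nat.prime_two, dvd_rfl, two_ne_zero⟩
    obtain ⟨m, hmS, hmfact⟩ := hmax 2 h2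
    have hm2 : m = 2 := by
      obtain ⟨hdvd, hm0⟩ := hS m hmS
      rcases (Nat.dvd_prime Nat.prime_two).mp hdvd with rfl | rfl
      · simp at hmfact
        rw [Nat.Prime.factorization_self Nat.prime_two] at hmfact
        omega
      · rfl
    subst hm2
    have hfeq : fAux 2 = 1 := by
      rw [fAux, epsAux, if_neg (by simp), Nat.Prime.primeFactors Nat.prime_two,
        Finset.sum_singleton, Nat.Prime.factorization_self Nat.prime_two]
      simp [Nat.totient_two]
    rw [hfeq]
    calc 1 = Nat.totient 2 := Nat.totient_two.symm
      _ ≤ ∑ m ∈ S, Nat.totient m :=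
        Finset.single_le_sum (fun i _ => Nat.zero_le _) hmS
  -- main case n ≠ 2
  set Q := n.primeFactors with hQ
  set F : ℕ → ℕ := fun p => (p ^ n.factorization p).totient with hF
  choose! c hcS hcfact using hmax
  have hmaps : ∀ p ∈ Q, c p ∈ S := hcS
  -- fiberwise decomposition
  have hfiber : ∑ p ∈ Q, F p = ∑ m ∈ S, ∑ p ∈ Q.filter (fun p => c p = m), F p :=
    (Finset.sum_fiberwise_of_maps_to hmaps F).symm
  -- per-fiber bound
  have key : ∀ m ∈ S, ∑ p ∈ Q.filter (fun p => c p = m), F p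
      ≤ m.totient + (if m = c 2 then epsAux n else 0) := by
    intro m hm
    obtain ⟨hmdvd, hm0⟩ := hS m hm
    set P := Q.filter (fun p => c p = m) with hP
    have hPfacts : ∀ p ∈ P, p.Prime ∧ m.factorization p = n.factorization p
        ∧ 0 < n.factorization p := by
      intro p hp
      rw [hP, Finset.mem_filter] at hp
      obtain ⟨hpQ, hcp⟩ := hp
      refine ⟨Nat.prime_of_mem_primeFactors hpQ, ?_, ?_⟩
      · rw [← hcp]; exact hcfact p hpQ
      · exact Nat.Prime.factorization_pos_of_dvd (Nat.prime_of_mem_primeFactors hpQ) hn0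
          (Nat.dvd_of_mem_primeFactors hpQ)
    have h1 : ∀ p ∈ P, 1 ≤ F p := by
      intro p hp
      obtain ⟨hpp, _, _⟩ := hPfacts p hp
      exact Nat.totient_pos.mpr (pow_pos hpp.pos _)
    have hone : ∀ p ∈ P, F p = 1 → p = 2 := by
      intro p hp hFp
      obtain ⟨hpp, _, hv⟩ := hPfacts p hp
      rw [hF] at hFp
      simp only at hFp
      rw [Nat.totient_prime_pow hpp hv] at hFp
      have := Nat.eq_one_of_mul_eq_one_left hFp
      have h2 := hpp.two_le
      omega
    have hsub : P ⊆ m.primeFactors := by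
      intro p hp
      obtain ⟨hpp, hfm, hv⟩ := hPfacts p hp
      refine Nat.mem_primeFactors.mpr ⟨hpp, ?_, hm0⟩
      apply Nat.dvd_of_factorization_pos
      omega
    have hprodle : ∏ p ∈ P, F p ≤ m.totient := by
      have heq : ∏ p ∈ P, F p = ∏ p ∈ P, (p ^ m.factorization p).totient := by
        refine Finset.prod_congr rfl fun p hp => ?_
        obtain ⟨_, hfm, _⟩ := hPfacts p hp
        rw [hF]; simp only; rw [hfm]
      rw [heq, totient_eq_prod_primeFactors m hm0]
      apply Finset.prod_le_prod_of_subset_of_one_le' hsub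
      intro p hp _
      exact Nat.totient_pos.mpr (pow_pos (Nat.prime_of_mem_primeFactors hp).pos _)
    have hcorr : (if 2 ∈ P ∧ F 2 = 1 then 1 else 0)
        ≤ (if m = c 2 then epsAux n else 0) := by
      by_cases hcond : 2 ∈ P ∧ F 2 = 1
      · rw [if_pos hcond]
        obtain ⟨h2P, hF2⟩ := hcond
        rw [hP, Finset.mem_filter] at h2P
        obtain ⟨h2Q, hc2⟩ := h2P
        rw [if_pos hc2.symm]
        have hv2 : n.factorization 2 = 1 := by
          have hv : 0 < n.factorization 2 :=
            Nat.Prime.factorization_pos_of_dvd Nat.prime_two hn0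
              (Nat.dvd_of_mem_primeFactors h2Q)
          rw [hF] at hF2
          simp only at hF2
          rw [Nat.totient_prime_pow Nat.prime_two hv] at hF2
          have h21 : (2:ℕ) - 1 = 1 := rfl
          rw [h21, mul_one] at hF2
          rcases Nat.lt_or_ge (n.factorization 2) 2 with hlt | hge
          · omega
          · exfalso
            have : 2 ≤ 2 ^ (n.factorization 2 - 1) :=
              Nat.one_lt_two_pow_iff.mpr (by omega)
            omega
        rw [epsAux, if_pos ⟨hv2, hn2⟩]
      · rw [if_neg hcond]; exact Nat.zero_le _
    calc ∑ p ∈ P, F p ≤ ∏ p ∈ P, F p + (if 2 ∈ P ∧ F 2 = 1 then 1 else 0) :=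
          sum_le_prod_add P F h1 hone
      _ ≤ m.totient + (if m = c 2 then epsAux n else 0) := Nat.add_le_add hprodle hcorr
  have htotal : ∑ p ∈ Q, F p ≤ (∑ m ∈ S, Nat.totient m) + epsAux n := by
    rw [hfiber]
    calc ∑ m ∈ S, ∑ p ∈ Q.filter (fun p => c p = m), F p
        ≤ ∑ m ∈ S, (m.totient + (if m = c 2 then epsAux n else 0)) :=
          Finset.sum_le_sum key
      _ = (∑ m ∈ S, Nat.totient m) + ∑ m ∈ S, (if m = c 2 then epsAux n else 0) :=
          Finset.sum_add_distrib
      _ ≤ (∑ m ∈ S, Nat.totient m) + epsAux n := by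
          apply Nat.add_le_add_left
          rw [Finset.sum_ite_eq' S (c 2) (fun _ => epsAux n)]
          split_ifs <;> omega
  have hgoal : (∑ p ∈ n.primeFactors, (p ^ n.factorization p).totient)
      ≤ (∑ m ∈ S, Nat.totient m) + epsAux n := htotal
  rw [fAux]
  omega

/-- If a prime power `p ^ k` (with `k ≥ 1`) divides the lcm of a finite set of nonzero
naturals, it divides one of them. -/
lemma exists_pow_dvd_of_dvd_lcm (S : Finset ℕ) (p k : ℕ) (hp : p.Prime) (hk : 1 ≤ k)
    (hS0 : ∀ m ∈ S, m ≠ 0) (h : p ^ k ∣ S.lcm id) : ∃ m ∈ S, p ^ k ∣ m := by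
  classical
  induction S using Finset.induction_on with
  | empty =>
    rw [Finset.lcm_empty] at h
    have h1 : p ^ k = 1 := Nat.dvd_one.mp h
    have h2 : 1 < p ^ k := Nat.one_lt_pow (by omega) hp.one_lt
    omega
  | @insert a T ha ih =>
    have ha0 : a ≠ 0 := hS0 a (mem_insert_self a T)
    have hT0 : ∀ m ∈ T, m ≠ 0 := fun m hm => hS0 m (mem_insert_of_mem hm)
    have hlcm0 : T.lcm id ≠ 0 := by
      rw [Ne, Finset.lcm_eq_zero_iff]
      rintro ⟨m, hm, hm0⟩
      exact hT0 m (by exact_mod_cast hm) hm0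
    rw [Finset.lcm_insert] at h
    have hid : (lcm (id a) (T.lcm id) : ℕ) = Nat.lcm a (T.lcm id) := rfl
    rw [hid] at h
    have hk' : k ≤ (Nat.lcm a (T.lcm id)).factorization p := by
      rw [← Nat.Prime.pow_dvd_iff_le_factorization hp (Nat.lcm_ne_zero ha0 hlcm0)]
      exact h
    rw [Nat.factorization_lcm ha0 hlcm0, Finsupp.sup_apply, le_sup_iff] at hk'
    rcases hk' with hk' | hk'
    · exact ⟨a, mem_insert_self a T,
        (Nat.Prime.pow_dvd_iff_le_factorization hp ha0).mpr hk'⟩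
    · obtain ⟨m, hm, hdvd⟩ := ih hT0
        ((Nat.Prime.pow_dvd_iff_le_factorization hp hlcm0).mpr hk')
      exact ⟨m, mem_insert_of_mem hm, hdvd⟩

/-- If `GL_d(ℚ)` contains an element of finite order exactly `n` (i.e. `ℤ/nℤ` acts
faithfully and linearly on a `ℚ`-vector space of dimension `d`), then `f(n) ≤ d`. -/
theorem f_le_dim_of_finite_order (d n : ℕ) (hd : 1 ≤ d) (hn : 2 ≤ n)
    (h : ∃ A : GL (Fin d) ℚ, orderOf A = n) : fAux n ≤ d := by
  classical
  obtain ⟨A, hA⟩ := h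
  have hn0 : 0 < n := by omega
  -- The underlying matrix
  set M : Matrix (Fin d) (Fin d) ℚ := (A : Matrix (Fin d) (Fin d) ℚ) with hM
  have hMn : M ^ n = 1 := by
    have h1 : A ^ n = 1 := by rw [← hA]; exact pow_orderOf_eq_one A
    have := congrArg Units.val h1
    simpa [hM] using this
  set μ : ℚ[X] := minpoly ℚ M with hμ
  have hint : IsIntegral ℚ M := Algebra.IsIntegral.isIntegral M
  have hμ0 : μ ≠ 0 := minpoly.ne_zero hint
  have hdvdXn : μ ∣ X ^ n - 1 := by
    apply minpoly.dvd
    rw [map_sub, map_pow, aeval_X, map_one, hMn, sub_self]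
  -- the set of cyclotomic indices
  set S : Finset ℕ := n.divisors.filter (fun m => cyclotomic m ℚ ∣ μ) with hS
  have hSdvd : ∀ m ∈ S, m ∣ n ∧ m ≠ 0 := by
    intro m hm
    rw [hS, Finset.mem_filter, Nat.mem_divisors] at hm
    exact ⟨hm.1.1, Nat.pos_of_mem_divisors (Nat.mem_divisors.mpr hm.1) |>.ne'⟩
  have hSpos : ∀ m ∈ S, 0 < m := fun m hm => Nat.pos_of_ne_zero (hSdvd m hm).2
  -- pairwise coprimality of cyclotomics
  have hpair : (↑S : Set ℕ).Pairwise (Function.onFun IsCoprime fun m => cyclotomic m ℚ) := by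
    intro a _ b _ hab
    exact cyclotomic.isCoprime_rat hab
  -- (1) the product of the cyclotomics in S divides μ
  have hprod_dvd_mu : (∏ m ∈ S, cyclotomic m ℚ) ∣ μ :=
    Finset.prod_dvd_of_coprime hpair (fun m hm => (Finset.mem_filter.mp hm).2)
  -- (2) μ divides the product over S
  have hmu_dvd_prod : μ ∣ ∏ m ∈ S, cyclotomic m ℚ := by
    have hsplit : (∏ m ∈ n.divisors, cyclotomic m ℚ)
        = (∏ m ∈ S, cyclotomic m ℚ) *
          (∏ m ∈ n.divisors.filter (fun m => ¬ cyclotomic m ℚ ∣ μ), cyclotomic m ℚ) := by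
      rw [hS, Finset.prod_filter_mul_prod_filter_not]
    have hdvdall : μ ∣ (∏ m ∈ S, cyclotomic m ℚ) *
        (∏ m ∈ n.divisors.filter (fun m => ¬ cyclotomic m ℚ ∣ μ), cyclotomic m ℚ) := by
      rw [← hsplit, prod_cyclotomic_eq_X_pow_sub_one hn0]
      exact hdvdXn
    have hco : IsCoprime μ
        (∏ m ∈ n.divisors.filter (fun m => ¬ cyclotomic m ℚ ∣ μ), cyclotomic m ℚ) := by
      apply IsCoprime.prod_right
      intro m hm
      rw [Finset.mem_filter] at hm
      have hmpos : 0 < m := Nat.pos_of_mem_divisors hm.1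
      exact ((Irreducible.coprime_iff_not_dvd
        (cyclotomic.irreducible_rat hmpos)).mpr hm.2).symm
    exact hco.dvd_of_dvd_mul_right hdvdall
  -- degree bound: ∑ φ(m) ≤ d
  have hdeg : ∑ m ∈ S, Nat.totient m ≤ d := by
    have hdvd_char : (∏ m ∈ S, cyclotomic m ℚ) ∣ M.charpoly :=
      hprod_dvd_mu.trans (Matrix.minpoly_dvd_charpoly M)
    have hchar0 : M.charpoly ≠ 0 := (Matrix.charpoly_monic M).ne_zero
    have h1 := Polynomial.natDegree_le_of_dvd hdvd_char hchar0
    rw [Matrix.charpoly_natDegree_eq_dim, Fintype.card_fin] at h1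
    rw [Polynomial.natDegree_prod _ _ (fun m hm => cyclotomic_ne_zero m ℚ)] at h1
    calc ∑ m ∈ S, Nat.totient m = ∑ m ∈ S, (cyclotomic m ℚ).natDegree := by
          refine Finset.sum_congr rfl fun m hm => ?_
          rw [natDegree_cyclotomic]
      _ ≤ d := h1
  -- lcm: n divides the lcm of S
  set L : ℕ := S.lcm id with hL
  have hprod_dvd_XL : (∏ m ∈ S, cyclotomic m ℚ) ∣ X ^ L - 1 := by
    apply Finset.prod_dvd_of_coprime hpair
    intro m hm
    have hmL : m ∣ L := Finset.dvd_lcm hm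
    obtain ⟨k, hk⟩ := hmL
    calc cyclotomic m ℚ ∣ X ^ m - 1 := cyclotomic.dvd_X_pow_sub_one m ℚ
      _ ∣ X ^ L - 1 := by
        rw [hk, pow_mul]
        simpa using sub_dvd_pow_sub_pow (X ^ m : ℚ[X]) 1 k
  have hML : M ^ L = 1 := by
    have hμL : μ ∣ X ^ L - 1 := hmu_dvd_prod.trans hprod_dvd_XL
    obtain ⟨q, hq⟩ := hμL
    have : (aeval M) (X ^ L - 1 : ℚ[X]) = 0 := by
      rw [hq, map_mul, minpoly.aeval, zero_mul]
    rw [map_sub, map_pow, aeval_X, map_one, sub_eq_zero] at this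
    exact this
  have hAL : A ^ L = 1 := by
    apply Units.ext
    simpa [hM] using hML
  have hnL : n ∣ L := by
    rw [← hA]
    exact orderOf_dvd_of_pow_eq_one hAL
  -- valuations are realized
  have hmax : ∀ p ∈ n.primeFactors, ∃ m ∈ S, m.factorization p = n.factorization p := by
    intro p hp
    have hpp : p.Prime := Nat.prime_of_mem_primeFactors hp
    have hv : 0 < n.factorization p :=
      hpp.factorization_pos_of_dvd hn0.ne' (Nat.dvd_of_mem_primeFactors hp)
    have hdvdL : p ^ n.factorization p ∣ L :=
      dvd_trans (Nat.ordProj_dvd n p) hnL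
    obtain ⟨m, hmS, hdvdm⟩ := exists_pow_dvd_of_dvd_lcm S p (n.factorization p) hpp hv
      (fun m hm => (hSdvd m hm).2) hdvdL
    refine ⟨m, hmS, le_antisymm ?_ ?_⟩
    · have := (Nat.factorization_le_iff_dvd (hSdvd m hmS).2 hn0.ne').mpr (hSdvd m hmS).1
      exact this p
    · exact (Nat.Prime.pow_dvd_iff_le_factorization hpp (hSdvd m hmS).2).mp hdvdm
  calc fAux n ≤ ∑ m ∈ S, Nat.totient m :=
        fAux_le_sum_totient n hn0.ne' S hSdvd hmax
    _ ≤ d := hdeg
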